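/- Let P(X) = X² − αX + β ∈ K[X] and B = K[X]/⟨P(X)⟩, and let χ : A⊗B → B⊗A be given by χ(a⊗1) = 1⊗a and χ(a⊗X) = 1⊗δ(a) + X⊗f(a). Then χ is a twisting map if and only if f is a K-algebra endomorphism, δ satisfies δ(ab) = aδ(b) + δ(a)f(b) with f(1)=1, and the identities δ² − αδ + β·id = β·f² and f∘δ + δ∘f = α(f − f²) hold. -/

import Mathlib

open TensorProduct LinearMap

variable (K : Type*)

def IsTwistingMap {A B : Type*} [Field K] [Ring A] [Ring B] [Algebra K A] [Algebra K B]
    (χ : A ⊗[K] B →ₗ[K] B ⊗[K] A) : Prop :=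
  (∀ b : B, χ ((1 : A) ⊗ₜ[K] b) = b ⊗ₜ[K] (1 : A)) ∧
  (∀ a : A, χ (a ⊗ₜ[K] (1 : B)) = (1 : B) ⊗ₜ[K] a) ∧
  (∀ (a a' : A) (b : B),
    χ ((a * a') ⊗ₜ[K] b) =
      lTensor B (mul' K A)
        (TensorProduct.assoc K B A A
          (rTensor A χ
            ((TensorProduct.assoc K A B A).symm (a ⊗ₜ[K] χ (a' ⊗ₜ[K] b)))))) ∧
  (∀ (a : A) (b b' : B),
    χ (a ⊗ₜ[K] (b * b')) =
      rTensor A (mul' K B)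
        ((TensorProduct.assoc K B B A).symm
          (lTensor B χ
            (TensorProduct.assoc K B A B (χ (a ⊗ₜ[K] b) ⊗ₜ[K] b')))))

noncomputable def twistMul {A B : Type*} [Field K] [Ring A] [Ring B] [Algebra K A] [Algebra K B]
    (χ : A ⊗[K] B →ₗ[K] B ⊗[K] A) :
    (B ⊗[K] A) ⊗[K] (B ⊗[K] A) →ₗ[K] B ⊗[K] A :=
  TensorProduct.map (mul' K B) (mul' K A)
    ∘ₗ (TensorProduct.assoc K B B (A ⊗[K] A)).symm.toLinearMap
    ∘ₗ lTensor B (TensorProduct.assoc K B A A).toLinearMap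
    ∘ₗ lTensor B (rTensor A χ)
    ∘ₗ lTensor B (TensorProduct.assoc K A B A).symm.toLinearMap
    ∘ₗ (TensorProduct.assoc K B A (B ⊗[K] A)).toLinearMap

/-- The algebra `K[X]/⟨X² - αX + β⟩`. -/
abbrev QDup (K : Type*) [Field K] (α β : K) : Type _ :=
  Polynomial K ⧸
    Ideal.span {(Polynomial.X : Polynomial K) ^ 2 - Polynomial.C α * Polynomial.X +
      Polynomial.C β}

/-- The class of `X` in `K[X]/⟨X² - αX + β⟩`. -/
noncomputable def QDup.x (K : Type*) [Field K] (α β : K) : QDup K α β :=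
  Ideal.Quotient.mk _ Polynomial.X

section Helpers

open Polynomial

variable {K} [Field K] (α β : K)

noncomputable abbrev Pq : Polynomial K := X ^ 2 - C α * X + C β

lemma tail_deg : degree (-(C α) * X + C β) < 2 := by
  apply lt_of_le_of_lt (degree_add_le _ _)
  rw [max_lt_iff]
  constructor
  · calc degree (-(C α) * X) ≤ degree (C (-α) * X) := by rw [map_neg]
      _ ≤ 1 := degree_C_mul_X_le _
      _ < 2 := by norm_num
  · exact lt_of_le_of_lt degree_C_le (by norm_num)

lemma Pq_eq : (Pq α β) = X ^ 2 + (-(C α) * X + C β) := by ring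

lemma Pq_monic : (Pq α β).Monic := by
  rw [Pq_eq]
  exact Polynomial.monic_X_pow_add (by simpa using tail_deg α β)

lemma Pq_degree : (Pq α β).degree = 2 := by
  rw [Pq_eq, degree_add_eq_left_of_degree_lt (by simpa using tail_deg α β), degree_X_pow]
  rfl

noncomputable def coordQ (i : ℕ) : QDup K α β →ₗ[K] K :=
  (Polynomial.lcoeff K i) ∘ₗ AdjoinRoot.modByMonicHom (Pq_monic α β)

lemma coordQ_mk (i : ℕ) (q : Polynomial K) (hq : q.degree < 2) :
    coordQ α β i (Ideal.Quotient.mk _ q) = q.coeff i := by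
  have h1 : coordQ α β i (Ideal.Quotient.mk _ q) = (q %ₘ Pq α β).coeff i := rfl
  rw [h1, (modByMonic_eq_self_iff (Pq_monic α β)).2 (by rw [Pq_degree]; exact hq)]

lemma coordQ_one_zero : coordQ α β 0 (1 : QDup K α β) = 1 := by
  rw [show (1 : QDup K α β) = Ideal.Quotient.mk _ (1 : Polynomial K) from rfl,
    coordQ_mk α β 0 1 (by rw [degree_one]; norm_num)]
  simp
lemma coordQ_one_one : coordQ α β 1 (1 : QDup K α β) = 0 := by
  rw [show (1 : QDup K α β) = Ideal.Quotient.mk _ (1 : Polynomial K) from rfl,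
    coordQ_mk α β 1 1 (by rw [degree_one]; norm_num)]
  simp [coeff_one]
lemma coordQ_x_zero : coordQ α β 0 (QDup.x K α β) = 0 := by
  rw [QDup.x, coordQ_mk α β 0 X (by rw [degree_X]; norm_num)]
  simp
lemma coordQ_x_one : coordQ α β 1 (QDup.x K α β) = 1 := by
  rw [QDup.x, coordQ_mk α β 1 X (by rw [degree_X]; norm_num)]
  simp

lemma x_sq : QDup.x K α β * QDup.x K α β = α • QDup.x K α β - β • 1 := by
  rw [← sub_eq_zero]
  have h1 : QDup.x K α β * QDup.x K α β - (α • QDup.x K α β - β • (1:QDup K α β))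
      = Ideal.Quotient.mk _ ((X*X - (α • X - β • 1)) : Polynomial K) := rfl
  rw [h1]
  apply Ideal.Quotient.eq_zero_iff_mem.2
  apply Ideal.subset_span
  show X * X - (α • X - β • 1) = X ^ 2 - C α * X + C β
  rw [smul_eq_C_mul, smul_eq_C_mul]
  ring

lemma QDup.repr (b : QDup K α β) :
    ∃ c d : K, b = c • (1 : QDup K α β) + d • QDup.x K α β := by
  obtain ⟨q, rfl⟩ := Ideal.Quotient.mk_surjective (I := Ideal.span {Pq α β}) b
  set r : Polynomial K := q %ₘ Pq α β with hr
  have key : (Ideal.Quotient.mk (Ideal.span {Pq α β})) q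
      = Ideal.Quotient.mk _ r := by
    rw [Ideal.Quotient.mk_eq_mk_iff_sub_mem, hr, modByMonic_eq_sub_mul_div _ (Pq α β),
      sub_sub_cancel]
    exact Ideal.mem_span_singleton.2 (dvd_mul_right _ _)
  have hdeg : r.degree < 2 := by
    rw [← Pq_degree α β]; exact degree_modByMonic_lt q (Pq_monic α β)
  have hnd : r.natDegree ≤ 1 := by
    by_cases h0 : r = 0
    · simp [h0]
    · have h2 : r.natDegree < 2 := by
        rw [Polynomial.natDegree_lt_iff_degree_lt h0]
        exact_mod_cast hdeg
      omega
  refine ⟨r.coeff 0, r.coeff 1, ?_⟩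
  have hrfl : r.coeff 0 • (1 : QDup K α β) + r.coeff 1 • QDup.x K α β
      = Ideal.Quotient.mk _ ((r.coeff 0) • (1:Polynomial K) + (r.coeff 1) • X) := rfl
  rw [key, hrfl]
  congr 1
  rw [smul_eq_C_mul, smul_eq_C_mul, mul_one]
  nth_rewrite 1 [eq_X_add_C_of_natDegree_le_one hnd]
  ring

noncomputable def coordMap (A : Type*) [AddCommGroup A] [Module K A] (i : ℕ) :
    QDup K α β ⊗[K] A →ₗ[K] A :=
  (TensorProduct.lid K A).toLinearMap ∘ₗ rTensor A (coordQ α β i)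

end Helpers

set_option maxHeartbeats 2000000 in
set_option synthInstance.maxHeartbeats 1000000 in
theorem quantum_duplicate_twisting {A : Type*} [Field K] [Ring A] [Algebra K A] (α β : K)
    (χ : A ⊗[K] QDup K α β →ₗ[K] QDup K α β ⊗[K] A) (δ f : A →ₗ[K] A)
    (hχ1 : ∀ a : A, χ (a ⊗ₜ[K] (1 : QDup K α β)) = (1 : QDup K α β) ⊗ₜ[K] a)
    (hχX : ∀ a : A,
      χ (a ⊗ₜ[K] QDup.x K α β) = (1 : QDup K α β) ⊗ₜ[K] δ a + QDup.x K α β ⊗ₜ[K] f a) :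
    IsTwistingMap K χ ↔
      (f 1 = 1 ∧ (∀ a b : A, f (a * b) = f a * f b)) ∧
      (∀ a b : A, δ (a * b) = a * δ b + δ a * f b) ∧
      (∀ a : A, δ (δ a) - α • δ a + β • a = β • f (f a)) ∧
      (∀ a : A, f (δ a) + δ (f a) = α • (f a - f (f a))) := by
  constructor
  · rintro ⟨h1, h2, h3, h4⟩
    have hfδ1 : δ 1 = 0 ∧ f 1 = 1 := by
      have E := h1 (QDup.x K α β)
      rw [hχX 1] at E
      have E0 := congrArg (coordMap α β A 0) E
      have E1 := congrArg (coordMap α β A 1) E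
      simp only [coordMap, comp_apply, map_add, rTensor_tmul, LinearEquiv.coe_coe,
        TensorProduct.lid_tmul, coordQ_one_zero, coordQ_one_one, coordQ_x_zero, coordQ_x_one,
        one_smul, zero_smul, add_zero, zero_add, smul_eq_mul, mul_one] at E0 E1
      exact ⟨E0, E1⟩
    have hmul : ∀ a a' : A, δ (a * a') = a * δ a' + δ a * f a' ∧ f (a * a') = f a * f a' := by
      intro a a'
      have E := h3 a a' (QDup.x K α β)
      simp only [hχX, hχ1, tmul_add, add_tmul, map_add, LinearEquiv.coe_coe,
        TensorProduct.assoc_symm_tmul, TensorProduct.assoc_tmul, rTensor_tmul, lTensor_tmul,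
        mul'_apply] at E
      have E0 := congrArg (coordMap α β A 0) E
      have E1 := congrArg (coordMap α β A 1) E
      simp only [coordMap, comp_apply, map_add, rTensor_tmul, LinearEquiv.coe_coe,
        TensorProduct.lid_tmul, coordQ_one_zero, coordQ_one_one, coordQ_x_zero, coordQ_x_one,
        one_smul, zero_smul, add_zero, zero_add, smul_eq_mul, mul_one] at E0 E1
      exact ⟨E0, E1⟩
    have hquad : ∀ a : A,
        (δ (δ a) - α • δ a + β • a = β • f (f a)) ∧
        (f (δ a) + δ (f a) = α • (f a - f (f a))) := by
      intro a
      have E := h4 a (QDup.x K α β) (QDup.x K α β)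
      rw [x_sq] at E
      simp only [hχX, hχ1, tmul_sub, sub_tmul, tmul_add, add_tmul, tmul_smul, smul_tmul',
        map_add, map_sub, map_smul, LinearEquiv.coe_coe,
        TensorProduct.assoc_symm_tmul, TensorProduct.assoc_tmul, rTensor_tmul, lTensor_tmul,
        mul'_apply, one_mul, mul_one] at E
      rw [x_sq] at E
      simp only [sub_tmul, smul_tmul', tmul_smul] at E
      have E0 := congrArg (coordMap α β A 0) E
      have E1 := congrArg (coordMap α β A 1) E
      simp only [coordMap, comp_apply, map_add, map_sub, map_smul, rTensor_tmul,
        LinearEquiv.coe_coe, TensorProduct.lid_tmul, coordQ_one_zero, coordQ_one_one,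
        coordQ_x_zero, coordQ_x_one,
        one_smul, zero_smul, add_zero, zero_add, smul_zero, sub_zero, zero_sub, smul_eq_mul, mul_one] at E0 E1
      constructor
      · linear_combination (norm := module) -E0
      · linear_combination (norm := module) -E1
    exact ⟨⟨hfδ1.2, fun a b => (hmul a b).2⟩, fun a b => (hmul a b).1,
      fun a => (hquad a).1, fun a => (hquad a).2⟩
  · rintro ⟨⟨hf1, hf⟩, hδ, hq1, hq2⟩
    have hδ1 : δ 1 = 0 := by
      have := hδ 1 1
      rw [mul_one, one_mul, hf1, mul_one] at this
      linear_combination (norm := module) -this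
    have hA : ∀ a : A, δ (δ a) = β • f (f a) + α • δ a - β • a := by
      intro a; linear_combination (norm := module) hq1 a
    have hB : ∀ a : A, f (δ a) = α • f a - α • f (f a) - δ (f a) := by
      intro a; linear_combination (norm := module) hq2 a
    refine ⟨?_, hχ1, ?_, ?_⟩
    · intro b
      obtain ⟨c, d, rfl⟩ := QDup.repr α β b
      simp only [tmul_add, tmul_smul, ← smul_tmul', map_add, map_smul, hχ1, hχX, hδ1, hf1,
        tmul_zero, smul_zero, zero_add, add_tmul, smul_add]
    · intro a a' b
      obtain ⟨c, d, rfl⟩ := QDup.repr α β b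
      simp only [tmul_add, tmul_smul, ← smul_tmul', add_tmul, map_add, map_smul, hχ1, hχX, smul_add,
        LinearEquiv.coe_coe, TensorProduct.assoc_symm_tmul, TensorProduct.assoc_tmul,
        rTensor_tmul, lTensor_tmul, mul'_apply, hδ, hf]
      module
    · intro a b b'
      obtain ⟨c, d, rfl⟩ := QDup.repr α β b
      obtain ⟨c', d', rfl⟩ := QDup.repr α β b'
      simp only [mul_add, add_mul, smul_mul_assoc, mul_smul_comm, one_mul, mul_one,
        smul_smul, x_sq]
      simp only [tmul_add, tmul_sub, tmul_smul, ← smul_tmul', sub_tmul, add_tmul, smul_sub, smul_add,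
        map_add, map_sub, map_smul, hχ1, hχX,
        LinearEquiv.coe_coe, TensorProduct.assoc_symm_tmul, TensorProduct.assoc_tmul,
        rTensor_tmul, lTensor_tmul, mul'_apply, one_mul, mul_one, hA, hB, x_sq]
      module
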